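/- arXiv:1707.07536 — 3 statements merged into one kernel-verified Lean document; each statement's English description precedes it below -/
import Mathlib

section
/- Let K be a complete non-archimedean valued field and let c₀ = c₀(ℕ, K) with the supremum norm. If T : c₀ → c₀ is a continuous linear operator and for every y ∈ c₀ the limit lim_{i→∞} ⟨T e_i, y⟩ = 0 holds (where ⟨x,y⟩ = Σ x_i y_i and (e_i) is the canonical basis), and moreover lim_{n→∞} ‖T e_n‖ = 0, then T is a compact operator (i.e., T maps the unit ball to a compactoid set). -/
open Filter Topology

noncomputable section

/-- `c₀(ℕ, K)`: the space of `K`-valued null sequences (zero-at-infinity functions on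
discrete `ℕ`), with the supremum norm. -/
abbrev Cz (K : Type) [NontriviallyNormedField K] := ZeroAtInftyContinuousMap ℕ K

/-- The canonical bilinear form `⟨x, y⟩ = ∑ᵢ xᵢ yᵢ` on `c₀`. -/
def pr {K : Type} [NontriviallyNormedField K] (x y : Cz K) : K := ∑' i, x i * y i

/-- The canonical basis vector `eᵢ` of `c₀`. -/
def e (K : Type) [NontriviallyNormedField K] (i : ℕ) : Cz K where
  toFun := fun j => if j = i then (1 : K) else 0
  continuous_toFun := continuous_of_discreteTopology
  zero_at_infty' := by
    rw [cocompact_eq_atTop (α := ℕ)]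
    apply tendsto_nhds_of_eventually_eq
    filter_upwards [eventually_gt_atTop i] with j hj
    simp [hj.ne']

/-- A continuous linear operator on `c₀` is compact iff it is a uniform limit of
finite-rank continuous operators (equivalently, it maps the unit ball to a compactoid). -/
def IsCompactOp {K : Type} [NontriviallyNormedField K] (T : Cz K →L[K] Cz K) : Prop :=
  ∀ ε : ℝ, 0 < ε → ∃ S : Cz K →L[K] Cz K,
    Module.Finite K (LinearMap.range (S : Cz K →ₗ[K] Cz K)) ∧ ‖T - S‖ ≤ ε

/-- The closed unit ball of a non-archimedean valued field, as a subring
(the valuation ring). -/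
def valRing {K : Type} [NontriviallyNormedField K]
    (hna : IsNonarchimedean (norm : K → ℝ)) : Subring K where
  carrier := {x : K | ‖x‖ ≤ 1}
  mul_mem' := fun {a b} ha hb => by
    simp only [Set.mem_setOf_eq] at *
    rw [norm_mul]
    nlinarith [norm_nonneg a, norm_nonneg b]
  one_mem' := by simp
  add_mem' := fun {a b} ha hb => by
    simp only [Set.mem_setOf_eq] at *
    exact (hna a b).trans (max_le ha hb)
  zero_mem' := by simp
  neg_mem' := fun {a} ha => by simpa using ha

/-- The maximal ideal (open unit ball) of the valuation ring. -/
def valIdeal {K : Type} [NontriviallyNormedField K]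
    (hna : IsNonarchimedean (norm : K → ℝ)) : Ideal (valRing hna) where
  carrier := {x | ‖(x : K)‖ < 1}
  add_mem' := fun {a b} ha hb => by
    simp only [Set.mem_setOf_eq] at *
    push_cast
    exact ((hna a b)).trans_lt (max_lt ha hb)
  zero_mem' := by simp
  smul_mem' := fun c x hx => by
    simp only [Set.mem_setOf_eq, smul_eq_mul] at *
    push_cast
    rw [norm_mul]
    calc ‖(c : K)‖ * ‖(x : K)‖ ≤ 1 * ‖(x : K)‖ := by
          exact mul_le_mul_of_nonneg_right c.2 (norm_nonneg _)
      _ = ‖(x : K)‖ := one_mul _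
      _ < 1 := hx

/-- The residue class field of a non-archimedean valued field. -/
abbrev Residue {K : Type} [NontriviallyNormedField K]
    (hna : IsNonarchimedean (norm : K → ℝ)) : Type :=
  valRing hna ⧸ valIdeal hna

/-- A commutative ring is formally real if `-1` is not a sum of squares. -/
def FormallyRealRing (R : Type) [CommRing R] : Prop :=
  ¬ ∃ (n : ℕ) (a : Fin n → R), (∑ i, a i ^ 2) = -1

variable {K : Type} [NontriviallyNormedField K]

theorem Cz.norm_apply_le (x : Cz K) (i : ℕ) : ‖x i‖ ≤ ‖x‖ := by
  rw [← ZeroAtInftyContinuousMap.norm_toBCF_eq_norm]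
  exact x.toBCF.norm_coe_le_norm i

theorem Cz.norm_le (x : Cz K) {C : ℝ} (hC : 0 ≤ C) (h : ∀ i, ‖x i‖ ≤ C) : ‖x‖ ≤ C := by
  rw [← ZeroAtInftyContinuousMap.norm_toBCF_eq_norm]
  exact BoundedContinuousFunction.norm_le hC |>.2 h

def evCLM (K : Type) [NontriviallyNormedField K] (i : ℕ) : Cz K →L[K] K :=
  LinearMap.mkContinuous
    { toFun := fun x => x i
      map_add' := fun x y => rfl
      map_smul' := fun c x => rfl } 1
    (fun x => by simpa using Cz.norm_apply_le x i)

theorem Cz.nonarch (hna : IsNonarchimedean (norm : K → ℝ)) (x y : Cz K) :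
    ‖x + y‖ ≤ max ‖x‖ ‖y‖ := by
  apply Cz.norm_le _ (le_max_iff.2 (Or.inl (norm_nonneg _)))
  intro i
  refine (hna (x i) (y i)).trans (max_le_max (Cz.norm_apply_le x i) (Cz.norm_apply_le y i))

theorem Cz.norm_sum_le (hna : IsNonarchimedean (norm : K → ℝ)) {C : ℝ} (hC : 0 ≤ C)
    (s : Finset ℕ) (f : ℕ → Cz K) (h : ∀ i ∈ s, ‖f i‖ ≤ C) : ‖∑ i ∈ s, f i‖ ≤ C := by
  induction s using Finset.induction with
  | empty => simpa
  | @insert a s hx ih =>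
    rw [Finset.sum_insert hx]
    refine (Cz.nonarch hna _ _).trans (max_le (h a (Finset.mem_insert_self a s)) ?_)
    exact ih fun i hi => h i (Finset.mem_insert_of_mem hi)

theorem Cz.partial_apply (x : Cz K) (n j : ℕ) :
    (∑ i ∈ Finset.range n, x i • e K i) j = if j < n then x j else 0 := by
  have : (∑ i ∈ Finset.range n, x i • e K i) j = ∑ i ∈ Finset.range n, (x i • e K i) j := by
    induction n with
    | zero => simp
    | succ n ih => rw [Finset.sum_range_succ, Finset.sum_range_succ, ← ih]; rfl
  rw [this]
  simp only [ZeroAtInftyContinuousMap.coe_smul, Pi.smul_apply, smul_eq_mul]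
  have he : ∀ i, (e K i) j = if j = i then (1:K) else 0 := fun i => rfl
  simp only [he, mul_ite, mul_one, mul_zero]
  rw [Finset.sum_ite_eq (Finset.range n) j (fun i => x i)]
  simp [Finset.mem_range]

theorem Cz.tendsto_partial (x : Cz K) :
    Tendsto (fun n => ∑ i ∈ Finset.range n, x i • e K i) atTop (𝓝 x) := by
  rw [NormedAddCommGroup.tendsto_atTop]
  intro ε hε
  have hz : Tendsto (fun j => x j) atTop (𝓝 0) := by
    have := x.zero_at_infty'
    rwa [cocompact_eq_atTop (α := ℕ)] at this
  obtain ⟨N, hN⟩ := (NormedAddCommGroup.tendsto_atTop.1 hz) (ε/2) (half_pos hε)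
  refine ⟨N, fun n hn => ?_⟩
  have : ‖∑ i ∈ Finset.range n, x i • e K i - x‖ ≤ ε/2 := by
    apply Cz.norm_le _ (half_pos hε).le
    intro j
    have hval : (∑ i ∈ Finset.range n, x i • e K i - x) j
        = (if j < n then x j else 0) - x j := by
      rw [ZeroAtInftyContinuousMap.sub_apply, Cz.partial_apply]
    rw [hval]
    by_cases hj : j < n
    · simp [hj, (half_pos hε).le]
    · simp only [hj, if_neg, zero_sub, norm_neg]
      have := hN j (le_trans hn (not_lt.1 hj))
      simpa using this.le
  linarith


theorem main {K : Type} [NontriviallyNormedField K] [CompleteSpace K]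
    (hna : IsNonarchimedean (norm : K → ℝ))
    (T : Cz K →L[K] Cz K)
    (h2 : Tendsto (fun n => ‖T (e K n)‖) atTop (𝓝 (0 : ℝ))) :
    ∀ ε : ℝ, 0 < ε → ∃ S : Cz K →L[K] Cz K,
      Module.Finite K (LinearMap.range (S : Cz K →ₗ[K] Cz K)) ∧ ‖T - S‖ ≤ ε := by
  intro ε hε
  obtain ⟨N, hN⟩ : ∃ N, ∀ n ≥ N, ‖T (e K n)‖ ≤ ε := by
    obtain ⟨N, hN⟩ := eventually_atTop.1 (h2.eventually (eventually_lt_nhds hε))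
    exact ⟨N, fun n hn => (hN n hn).le⟩
  set S : Cz K →L[K] Cz K := ∑ i ∈ Finset.range N, (evCLM K i).smulRight (T (e K i)) with hS
  have hSapp : ∀ x : Cz K, S x = ∑ i ∈ Finset.range N, x i • T (e K i) := by
    intro x
    rw [hS]
    simp [ContinuousLinearMap.sum_apply, ContinuousLinearMap.smulRight_apply]
    rfl
  refine ⟨S, ?_, ?_⟩
  · have hle : LinearMap.range (S : Cz K →ₗ[K] Cz K) ≤ Submodule.span K ((fun i => T (e K i)) '' (Finset.range N)) := by
      rintro _ ⟨x, rfl⟩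
      rw [ContinuousLinearMap.coe_coe, hSapp x]
      apply Submodule.sum_mem
      intro i hi
      exact Submodule.smul_mem _ _ (Submodule.subset_span ⟨i, by simpa using hi, rfl⟩)
    have : Module.Finite K (Submodule.span K ((fun i => T (e K i)) '' (Finset.range N))) :=
      Module.Finite.span_of_finite K ((Finset.range N).finite_toSet.image _)
    exact Submodule.finiteDimensional_of_le hle
  · apply ContinuousLinearMap.opNorm_le_bound _ hε.le
    intro x
    have key : Tendsto (fun n => T (∑ i ∈ Finset.range n, x i • e K i) - S x) atTop
        (𝓝 ((T - S) x)) := by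
      have h1 : Tendsto (fun n => T (∑ i ∈ Finset.range n, x i • e K i)) atTop (𝓝 (T x)) :=
        (T.continuous.tendsto x).comp (Cz.tendsto_partial x)
      simpa using h1.sub_const (S x)
    have hbd : ∀ n ≥ N, ‖T (∑ i ∈ Finset.range n, x i • e K i) - S x‖ ≤ ε * ‖x‖ := by
      intro n hn
      have hTm : T (∑ i ∈ Finset.range n, x i • e K i)
          = ∑ i ∈ Finset.range n, x i • T (e K i) := by
        rw [map_sum]; simp
      rw [hTm, hSapp, ← Finset.sum_Ico_eq_sub _ hn]
      apply Cz.norm_sum_le hna (mul_nonneg hε.le (norm_nonneg x))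
      intro i hi
      refine (norm_smul_le (x i) (T (e K i))).trans ?_
      calc ‖x i‖ * ‖T (e K i)‖ ≤ ‖x‖ * ε := by
            apply mul_le_mul (Cz.norm_apply_le x i) (hN i (Finset.mem_Ico.1 hi).1)
              (norm_nonneg _) (norm_nonneg _)
        _ = ε * ‖x‖ := mul_comm _ _
    exact le_of_tendsto key.norm (eventually_atTop.2 ⟨N, hbd⟩)

theorem stmt0 {K : Type} [NontriviallyNormedField K] [CompleteSpace K]
    (hna : IsNonarchimedean (norm : K → ℝ))
    (hres : FormallyRealRing (Residue hna))
    (T : Cz K →L[K] Cz K)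
    (h1 : ∀ y : Cz K, Tendsto (fun i => pr (T (e K i)) y) atTop (𝓝 0))
    (h2 : Tendsto (fun n => ‖T (e K n)‖) atTop (𝓝 (0 : ℝ))) :
    IsCompactOp T := fun ε hε => main hna T h2 ε hε
end
end

section
/- Let K be a complete non-archimedean valued field. A continuous linear operator T : c₀ → c₀ admits an adjoint with respect to ⟨x,y⟩ = Σ x_i y_i if and only if for every y ∈ c₀, lim_{i→∞} ⟨T e_i, y⟩ = 0. -/
open Filter Topology

noncomputable section

namespace Stmt3Aux

variable {K : Type} [NontriviallyNormedField K] [CompleteSpace K]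

lemma apply_norm_le (f : Cz K) (i : ℕ) : ‖f i‖ ≤ ‖f‖ :=
  calc ‖f i‖ = ‖f.toBCF i‖ := rfl
    _ ≤ ‖f.toBCF‖ := f.toBCF.norm_coe_le_norm i
    _ = ‖f‖ := ZeroAtInftyContinuousMap.norm_toBCF_eq_norm

lemma czNorm_le (f : Cz K) {C : ℝ} (hC : 0 ≤ C) (h : ∀ i, ‖f i‖ ≤ C) : ‖f‖ ≤ C := by
  rw [← ZeroAtInftyContinuousMap.norm_toBCF_eq_norm]
  exact (BoundedContinuousFunction.norm_le hC).2 h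

lemma tendsto_atTop_cz (f : Cz K) : Tendsto (fun i => f i) atTop (𝓝 0) := by
  have := f.zero_at_infty'
  rwa [cocompact_eq_atTop (α := ℕ)] at this

lemma e_apply (i j : ℕ) : e K i j = if j = i then 1 else 0 := rfl

lemma norm_e_le (i : ℕ) : ‖e K i‖ ≤ 1 := by
  refine czNorm_le _ zero_le_one fun j => ?_
  rw [e_apply]
  by_cases h : j = i <;> simp [h]

lemma summable_mul (hna : IsNonarchimedean (norm : K → ℝ)) (x y : Cz K) :
    Summable fun i => x i * y i := by
  have : IsUltrametricDist K :=
    IsUltrametricDist.isUltrametricDist_of_isNonarchimedean_norm hna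
  apply NonarchimedeanAddGroup.summable_of_tendsto_cofinite_zero
  rw [Nat.cofinite_eq_atTop, tendsto_zero_iff_norm_tendsto_zero]
  refine squeeze_zero (g := fun i => ‖x i‖ * ‖y‖) (fun i => norm_nonneg _) (fun i => ?_) ?_
  · rw [norm_mul]
    exact mul_le_mul_of_nonneg_left (apply_norm_le y i) (norm_nonneg _)
  · have hx : Tendsto (fun i => ‖x i‖) atTop (𝓝 0) :=
      tendsto_zero_iff_norm_tendsto_zero.mp (tendsto_atTop_cz x)
    simpa using hx.mul_const ‖y‖

lemma norm_pr_le (hna : IsNonarchimedean (norm : K → ℝ)) (x y : Cz K) :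
    ‖pr x y‖ ≤ ‖x‖ * ‖y‖ := by
  have : IsUltrametricDist K :=
    IsUltrametricDist.isUltrametricDist_of_isNonarchimedean_norm hna
  have hs : Tendsto (fun s : Finset ℕ => ∑ i ∈ s, x i * y i) atTop (𝓝 (pr x y)) :=
    (summable_mul hna x y).hasSum
  refine le_of_tendsto hs.norm (Filter.Eventually.of_forall fun s => ?_)
  refine IsUltrametricDist.norm_sum_le_of_forall_le_of_nonneg (by positivity) fun i _ => ?_
  rw [norm_mul]
  exact mul_le_mul (apply_norm_le x i) (apply_norm_le y i) (norm_nonneg _) (norm_nonneg _)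

lemma pr_add_left (hna : IsNonarchimedean (norm : K → ℝ)) (x y z : Cz K) :
    pr (x + y) z = pr x z + pr y z := by
  unfold pr
  rw [tsum_congr (f := fun i => (x + y) i * z i)
    (g := fun i => x i * z i + y i * z i) (fun i => by
      simp [ZeroAtInftyContinuousMap.coe_add, add_mul])]
  exact Summable.tsum_add (summable_mul hna x z) (summable_mul hna y z)

lemma pr_smul_left (c : K) (x z : Cz K) : pr (c • x) z = c * pr x z := by
  unfold pr
  rw [tsum_congr (f := fun i => (c • x) i * z i)
    (g := fun i => c * (x i * z i)) (fun i => by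
      simp [ZeroAtInftyContinuousMap.coe_smul, mul_assoc])]
  exact tsum_mul_left

lemma pr_add_right (hna : IsNonarchimedean (norm : K → ℝ)) (x z w : Cz K) :
    pr x (z + w) = pr x z + pr x w := by
  unfold pr
  rw [tsum_congr (f := fun i => x i * (z + w) i)
    (g := fun i => x i * z i + x i * w i) (fun i => by
      simp [ZeroAtInftyContinuousMap.coe_add, mul_add])]
  exact Summable.tsum_add (summable_mul hna x z) (summable_mul hna x w)

lemma pr_smul_right (c : K) (x z : Cz K) : pr x (c • z) = c * pr x z := by
  unfold pr
  rw [tsum_congr (f := fun i => x i * (c • z) i)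
    (g := fun i => c * (x i * z i)) (fun i => by
      simp [ZeroAtInftyContinuousMap.coe_smul]; ring)]
  exact tsum_mul_left

lemma pr_e_left (i : ℕ) (y : Cz K) : pr (e K i) y = y i := by
  unfold pr
  rw [tsum_eq_single i]
  · simp [e_apply]
  · intro j hj
    simp [e_apply, hj]

/-- pr as a continuous linear functional in the first argument. -/
def prCLM (hna : IsNonarchimedean (norm : K → ℝ)) (z : Cz K) : Cz K →L[K] K :=
  LinearMap.mkContinuous
    { toFun := fun x => pr x z
      map_add' := fun x y => pr_add_left hna x y z
      map_smul' := fun c x => pr_smul_left c x z }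
    ‖z‖ (fun x => by rw [mul_comm]; exact norm_pr_le hna x z)

@[simp] lemma prCLM_apply (hna : IsNonarchimedean (norm : K → ℝ)) (z x : Cz K) :
    prCLM hna z x = pr x z := rfl

/-- Build an element of `c₀` from a null sequence. -/
def mkCz (f : ℕ → K) (hf : Tendsto f atTop (𝓝 0)) : Cz K where
  toFun := f
  continuous_toFun := continuous_of_discreteTopology
  zero_at_infty' := by rwa [cocompact_eq_atTop (α := ℕ)]

@[simp] lemma mkCz_apply (f : ℕ → K) (hf : Tendsto f atTop (𝓝 0)) (i : ℕ) :
    mkCz f hf i = f i := rfl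

end Stmt3Aux

open Stmt3Aux

theorem stmt3 {K : Type} [NontriviallyNormedField K] [CompleteSpace K]
    (hna : IsNonarchimedean (norm : K → ℝ))
    (hres : FormallyRealRing (Residue hna))
    (T : Cz K →L[K] Cz K) :
    (∃ S : Cz K →L[K] Cz K, ∀ x z : Cz K, pr (T x) z = pr x (S z)) ↔
      (∀ z : Cz K, Tendsto (fun i => pr (T (e K i)) z) atTop (𝓝 0)) := by
  constructor
  · rintro ⟨S, hS⟩ z
    have h2 : (fun i => pr (T (e K i)) z) = fun i => (S z) i :=
      funext fun i => by rw [hS, pr_e_left]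
    rw [h2]
    exact tendsto_atTop_cz (S z)
  · intro h
    set S0 : Cz K → Cz K := fun z => mkCz (fun i => pr (T (e K i)) z) (h z) with hS0
    have hadd : ∀ z w, S0 (z + w) = S0 z + S0 w := fun z w =>
      ZeroAtInftyContinuousMap.ext fun i => by
        simp [S0, ZeroAtInftyContinuousMap.coe_add, pr_add_right hna]
    have hsmul : ∀ (c : K) (z : Cz K), S0 (c • z) = c • S0 z := fun c z =>
      ZeroAtInftyContinuousMap.ext fun i => by
        simp [S0, ZeroAtInftyContinuousMap.coe_smul, pr_smul_right]
    have hbound : ∀ z, ‖S0 z‖ ≤ ‖T‖ * ‖z‖ := by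
      intro z
      refine czNorm_le _ (by positivity) fun i => ?_
      calc ‖pr (T (e K i)) z‖ ≤ ‖T (e K i)‖ * ‖z‖ := norm_pr_le hna _ z
        _ ≤ (‖T‖ * ‖e K i‖) * ‖z‖ := by
            gcongr
            exact T.le_opNorm _
        _ ≤ (‖T‖ * 1) * ‖z‖ := by
            gcongr
            exact norm_e_le i
        _ = ‖T‖ * ‖z‖ := by ring
    set S : Cz K →L[K] Cz K := LinearMap.mkContinuous
      { toFun := S0, map_add' := hadd, map_smul' := hsmul } ‖T‖ hbound with hSdef
    refine ⟨S, fun x z => ?_⟩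
    have hSz : ∀ i, (S z) i = pr (T (e K i)) z := fun i => rfl
    set P : ℕ → Cz K := fun n => ∑ i ∈ Finset.range n, x i • e K i with hP
    have hcoe : ∀ (s : Finset ℕ) (f : ℕ → Cz K) (j : ℕ),
        (∑ i ∈ s, f i) j = ∑ i ∈ s, f i j := by
      intro s f j
      induction s using Finset.cons_induction with
      | empty => simp
      | cons a s ha ih =>
        rw [Finset.sum_cons, Finset.sum_cons, ZeroAtInftyContinuousMap.coe_add,
          Pi.add_apply, ih]
    have hP_apply : ∀ n j, P n j = if j < n then x j else 0 := by
      intro n j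
      rw [hP]
      simp only [hcoe]
      have : ∀ i, (x i • e K i) j = if j = i then x i else 0 := fun i => by
        simp [ZeroAtInftyContinuousMap.coe_smul, e_apply]
      rw [Finset.sum_congr rfl fun i _ => this i, Finset.sum_ite_eq]
      simp [Finset.mem_range]
    have hPx : Tendsto P atTop (𝓝 x) := by
      rw [Metric.tendsto_atTop]
      intro ε hε
      have hx := NormedAddCommGroup.tendsto_nhds_zero.mp (tendsto_atTop_cz x) (ε / 2)
        (by positivity)
      obtain ⟨N, hN⟩ := eventually_atTop.mp hx
      refine ⟨N, fun n hn => ?_⟩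
      rw [dist_eq_norm]
      have hle : ‖P n - x‖ ≤ ε / 2 := by
        refine czNorm_le _ (by positivity) fun j => ?_
        have : (P n - x) j = P n j - x j := by
          simp [ZeroAtInftyContinuousMap.coe_sub]
        rw [this, hP_apply]
        by_cases hj : j < n
        · simp only [hj, if_true, sub_self, norm_zero]
          positivity
        · simp only [hj, if_neg, ite_false, zero_sub, norm_neg]
          exact (hN j (le_trans hn (not_lt.mp hj))).le
      linarith
    have key1 : Tendsto (fun n => prCLM hna z (T (P n))) atTop
        (𝓝 (prCLM hna z (T x))) :=
      ((prCLM hna z).continuous.tendsto _).comp ((T.continuous.tendsto x).comp hPx)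
    have key2 : ∀ n, prCLM hna z (T (P n)) =
        ∑ i ∈ Finset.range n, x i * pr (T (e K i)) z := by
      intro n
      rw [hP, map_sum, map_sum]
      refine Finset.sum_congr rfl fun i _ => ?_
      rw [map_smul, map_smul]
      simp [smul_eq_mul]
    have key3 : Tendsto (fun n => ∑ i ∈ Finset.range n, x i * pr (T (e K i)) z)
        atTop (𝓝 (pr x (S z))) := by
      have hsum : Summable fun i => x i * (S z) i := summable_mul hna x (S z)
      have ht := hsum.hasSum.tendsto_sum_nat
      have heq : (fun n => ∑ i ∈ Finset.range n, x i * pr (T (e K i)) z)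
          = fun n => ∑ i ∈ Finset.range n, x i * (S z) i :=
        funext fun n => Finset.sum_congr rfl fun i _ => by rw [hSz]
      rw [heq]
      exact ht
    simp only [key2] at key1
    have := tendsto_nhds_unique key1 key3
    simpa using this
end
end

section
/- The norm on 𝒮_Y(c₀) is power multiplicative: for every H = αId + T_λ ∈ 𝒮_Y(c₀) and every n ∈ ℕ, ‖Hⁿ‖ = ‖H‖ⁿ. -/
open Filter Topology

noncomputable section

namespace Aux13
variable {K : Type} [NontriviallyNormedField K]

lemma cz_le_norm (f : Cz K) (i : ℕ) : ‖f i‖ ≤ ‖f‖ := by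
  rw [← ZeroAtInftyContinuousMap.norm_toBCF_eq_norm]
  exact f.toBCF.norm_coe_le_norm i

lemma cz_norm_le (f : Cz K) {C : ℝ} (hC : 0 ≤ C) (h : ∀ i, ‖f i‖ ≤ C) : ‖f‖ ≤ C := by
  rw [← ZeroAtInftyContinuousMap.norm_toBCF_eq_norm]
  exact (BoundedContinuousFunction.norm_le hC).mpr h

lemma cz_tendsto (f : Cz K) : Tendsto f cofinite (𝓝 0) := by
  have := f.zero_at_infty'
  rwa [cocompact_eq_atTop (α := ℕ), ← Nat.cofinite_eq_atTop] at this

lemma cz_na (hna : IsNonarchimedean (norm : K → ℝ)) :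
    IsNonarchimedean (norm : Cz K → ℝ) := by
  intro f g
  refine cz_norm_le _ (le_max_iff.mpr (Or.inl (norm_nonneg f))) fun i => ?_
  have : (f + g) i = f i + g i := rfl
  rw [this]
  exact (hna (f i) (g i)).trans (max_le_max (cz_le_norm f i) (cz_le_norm g i))

lemma cz_exists_norm_eq (f : Cz K) : ∃ i, ‖f i‖ = ‖f‖ := by
  rcases eq_or_ne f 0 with rfl | hf
  · exact ⟨0, by simp⟩
  have hex : ∃ i₀, f i₀ ≠ 0 := by
    by_contra h
    push_neg at h
    exact hf (DFunLike.ext _ _ fun i => h i)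
  obtain ⟨i₀, hi₀⟩ := hex
  have hc : 0 < ‖f i₀‖ := norm_pos_iff.mpr hi₀
  have hfin : {i | ‖f i₀‖ ≤ ‖f i‖}.Finite := by
    have h2 : Tendsto (fun i => ‖f i‖) cofinite (𝓝 0) := by
      simpa using (cz_tendsto f).norm
    have := h2.eventually_lt_const hc
    simpa [not_le] using this
  have hne : hfin.toFinset.Nonempty := ⟨i₀, by simp⟩
  obtain ⟨j, hjmem, hj⟩ := hfin.toFinset.exists_max_image (fun i => ‖f i‖) hne
  refine ⟨j, le_antisymm (cz_le_norm f j) ?_⟩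
  refine cz_norm_le _ (norm_nonneg _) fun i => ?_
  by_cases hi : i ∈ hfin.toFinset
  · exact hj i hi
  · have h1 : ‖f i‖ < ‖f i₀‖ := by simpa [not_le] using (Set.Finite.mem_toFinset hfin).not.mp hi
    exact h1.le.trans (hj i₀ (by simp))

variable [CompleteSpace K]

lemma pr_summable (hna : IsNonarchimedean (norm : K → ℝ)) (x y : Cz K) :
    Summable fun i => x i * y i := by
  haveI := IsUltrametricDist.isUltrametricDist_of_isNonarchimedean_norm hna
  apply NonarchimedeanAddGroup.summable_of_tendsto_cofinite_zero
  refine squeeze_zero_norm (fun i => ?_)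
    (by simpa using ((cz_tendsto x).norm.mul_const ‖y‖) :
      Tendsto (fun i => ‖x i‖ * ‖y‖) cofinite (𝓝 0))
  rw [norm_mul]
  exact mul_le_mul_of_nonneg_left (cz_le_norm y i) (norm_nonneg _)

omit [CompleteSpace K] in
lemma cz_norm_smul (r : K) (f : Cz K) : ‖r • f‖ = ‖r‖ * ‖f‖ := norm_smul r f

omit [CompleteSpace K] in
lemma pr_le (hna : IsNonarchimedean (norm : K → ℝ)) (x y : Cz K) :
    ‖pr x y‖ ≤ ‖x‖ * ‖y‖ := by
  haveI := IsUltrametricDist.isUltrametricDist_of_isNonarchimedean_norm hna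
  refine IsUltrametricDist.norm_tsum_le_of_forall_le_of_nonneg
    (mul_nonneg (norm_nonneg _) (norm_nonneg _)) fun i => ?_
  rw [norm_mul]
  exact mul_le_mul (cz_le_norm x i) (cz_le_norm y i) (norm_nonneg _) (norm_nonneg _)

set_option maxHeartbeats 1000000 in
set_option synthInstance.maxHeartbeats 400000 in
lemma key_pr (hna : IsNonarchimedean (norm : K → ℝ))
    (hres : FormallyRealRing (Residue hna)) (x : Cz K) :
    ‖pr x x‖ = ‖x‖ ^ 2 := by
  haveI := IsUltrametricDist.isUltrametricDist_of_isNonarchimedean_norm hna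
  rcases eq_or_ne x 0 with rfl | hx
  · have : pr (0 : Cz K) 0 = 0 := by
      simp only [pr]
      convert tsum_zero with i
      show (0 : Cz K) i * (0 : Cz K) i = 0
      simp
    simp [this]
  have hxpos : 0 < ‖x‖ := norm_pos_iff.mpr hx
  refine le_antisymm (by rw [sq]; exact pr_le hna x x) ?_
  by_contra hlt
  push_neg at hlt
  obtain ⟨i₀, hi₀⟩ := cz_exists_norm_eq x
  set c := x i₀ with hcdef
  have hc : c ≠ 0 := by
    rw [← norm_pos_iff, hi₀]; exact hxpos
  set z : ℕ → K := fun i => x i / c with hzdef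
  have hz1 : ∀ i, ‖z i‖ ≤ 1 := fun i => by
    rw [hzdef]
    simp only [norm_div]
    rw [div_le_one (by rw [hi₀]; exact hxpos)]
    rw [hi₀]
    exact cz_le_norm x i
  have hzi₀ : z i₀ = 1 := div_self hc
  have hsummx : Summable fun i => x i * x i := pr_summable hna x x
  have hsummz : Summable fun i => z i * z i := by
    have := hsummx.div_const (c * c)
    refine this.congr fun i => ?_
    rw [hzdef]
    field_simp
  have htsum : pr x x = c ^ 2 * ∑' i, z i * z i := by
    rw [← tsum_mul_left]
    refine tsum_congr fun i => ?_
    rw [hzdef]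
    field_simp
  have hT : ‖∑' i, z i * z i‖ < 1 := by
    have h1 : ‖pr x x‖ = ‖x‖ ^ 2 * ‖∑' i, z i * z i‖ := by
      rw [htsum, norm_mul, norm_pow, hcdef, hi₀]
    rw [h1] at hlt
    by_contra h2
    push_neg at h2
    nlinarith
  -- the finite set of large indices
  have hztend : Tendsto (fun i => ‖z i‖) cofinite (𝓝 0) := by
    have : Tendsto z cofinite (𝓝 0) := by
      have := (cz_tendsto x).div_const c
      simpa [hzdef] using this
    simpa using this.norm
  have hfin : {i | (2:ℝ)⁻¹ ≤ ‖z i‖}.Finite := by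
    have := hztend.eventually_lt_const (show (0:ℝ) < 2⁻¹ by norm_num)
    simpa [not_lt] using this
  set S := hfin.toFinset with hSdef
  have hi₀S : i₀ ∈ S := by
    simp only [hSdef, Set.Finite.mem_toFinset, Set.mem_setOf_eq, hzi₀, norm_one]
    norm_num
  have hsplit : (∑' (i : ((S : Set ℕ)ᶜ : Set ℕ)), (z i * z i : K))
      = (∑' i, z i * z i) - ∑ i ∈ S, z i * z i := by
    have h1 := Summable.tsum_add_tsum_compl (f := fun i => z i * z i)
      (s := (S : Set ℕ)) (hsummz.subtype _) (hsummz.subtype _)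
    have h2 : (∑' (i : (S : Set ℕ)), (z i * z i : K)) = ∑ i ∈ S, z i * z i := by
      exact Finset.tsum_subtype S fun i => z i * z i
    rw [h2] at h1
    linear_combination h1
  have hcompl : ‖∑' (i : ((S : Set ℕ)ᶜ : Set ℕ)), (z i * z i : K)‖ ≤ 1/2 := by
    refine IsUltrametricDist.norm_tsum_le_of_forall_le_of_nonneg (by norm_num) fun i => ?_
    have hi : ‖z (i : ℕ)‖ ≤ 1/2 := by
      have h3 := i.2
      simp only [hSdef, Set.mem_compl_iff, Finset.coe_sort_coe, Set.Finite.coe_toFinset,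
        Set.mem_setOf_eq, not_le] at h3
      rw [show (1:ℝ)/2 = 2⁻¹ by norm_num]
      exact h3.le
    rw [norm_mul]
    calc ‖z (i:ℕ)‖ * ‖z (i:ℕ)‖ ≤ (1/2) * 1 :=
          mul_le_mul hi (hz1 _) (norm_nonneg _) (by norm_num)
      _ = 1/2 := by norm_num
  have hSsum : ‖∑ i ∈ S, z i * z i‖ < 1 := by
    have : (∑ i ∈ S, z i * z i)
        = (∑' i, z i * z i) - ∑' (i : ((S : Set ℕ)ᶜ : Set ℕ)), (z i * z i : K) := by
      rw [hsplit]; ring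
    rw [this]
    have hna' := hna ((∑' i, z i * z i)) (-(∑' (i : ((S : Set ℕ)ᶜ : Set ℕ)), (z i * z i : K)))
    rw [← sub_eq_add_neg, norm_neg] at hna'
    refine hna'.trans_lt (max_lt hT (hcompl.trans_lt (by norm_num)))
  -- move to the valuation ring and residue field
  set w : ℕ → valRing hna := fun i => ⟨z i, hz1 i⟩ with hwdef
  have hmem : (∑ i ∈ S, w i * w i) ∈ valIdeal hna := by
    show ‖((∑ i ∈ S, w i * w i : valRing hna) : K)‖ < 1
    have : ((∑ i ∈ S, w i * w i : valRing hna) : K) = ∑ i ∈ S, z i * z i := by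
      push_cast
      rfl
    rw [this]
    exact hSsum
  set π : valRing hna →+* Residue hna := Ideal.Quotient.mk (valIdeal hna) with hπdef
  have h0 : ∑ i ∈ S, (π (w i)) ^ 2 = 0 := by
    have : ∑ i ∈ S, (π (w i)) ^ 2 = π (∑ i ∈ S, w i * w i) := by
      rw [map_sum π (fun i => w i * w i) S]
      refine Finset.sum_congr rfl fun i _ => ?_
      rw [sq, map_mul]
    rw [this]
    exact Ideal.Quotient.eq_zero_iff_mem.mpr hmem
  have hone : π (w i₀) = 1 := by
    have : w i₀ = 1 := by
      apply Subtype.ext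
      show z i₀ = 1
      exact hzi₀
    rw [this, map_one]
  apply hres
  set s := S.erase i₀ with hsdef
  have hsum_erase : ∑ i ∈ s, (π (w i)) ^ 2 = -1 := by
    have h1 : (π (w i₀)) ^ 2 + ∑ i ∈ s, (π (w i)) ^ 2 = ∑ i ∈ S, (π (w i)) ^ 2 :=
      Finset.add_sum_erase S (fun i => (π (w i)) ^ 2) hi₀S
    rw [h0, hone, one_pow] at h1
    linear_combination h1
  refine ⟨s.card, fun j => π (w ((s.equivFin.symm j : s) : ℕ)), ?_⟩
  rw [← hsum_erase, ← Finset.sum_coe_sort s (fun i => (π (w i)) ^ 2)]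
  exact Equiv.sum_comp s.equivFin.symm (fun i : s => (π (w (i : ℕ))) ^ 2)

end Aux13

open Aux13 in
set_option maxHeartbeats 1000000 in
theorem stmt13 {K : Type} [NontriviallyNormedField K] [CompleteSpace K]
    (hna : IsNonarchimedean (norm : K → ℝ))
    (hres : FormallyRealRing (Residue hna))
    (y : ℕ → Cz K) (hy : ∀ i j, i ≠ j → pr (y i) (y j) = 0) (hy1 : ∀ i, ‖y i‖ = 1)
    (P : ℕ → (Cz K →L[K] Cz K))
    (hP : ∀ i x, P i x = (pr x (y i) / pr (y i) (y i)) • y i)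
    (α : K) (lam : Cz K) (hsum : Summable fun i => lam i • P i)
    (n : ℕ) (hn : 1 ≤ n) :
    ‖(α • (1 : Cz K →L[K] Cz K) + ∑' i, lam i • P i) ^ n‖ =
      ‖α • (1 : Cz K →L[K] Cz K) + ∑' i, lam i • P i‖ ^ n := by
  haveI := IsUltrametricDist.isUltrametricDist_of_isNonarchimedean_norm hna
  haveI : IsUltrametricDist (Cz K) :=
    IsUltrametricDist.isUltrametricDist_of_isNonarchimedean_norm (cz_na hna)
  set T : Cz K →L[K] Cz K := ∑' i, lam i • P i with hT
  set H : Cz K →L[K] Cz K := α • 1 + T with hH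
  -- norms of the diagonal entries
  have hyy : ∀ i, ‖pr (y i) (y i)‖ = 1 := fun i => by
    rw [key_pr hna hres (y i), hy1 i, one_pow]
  have hyy0 : ∀ i, pr (y i) (y i) ≠ 0 := fun i => by
    intro h
    have := hyy i
    rw [h, norm_zero] at this
    norm_num at this
  -- P i (y j)
  have hPy : ∀ i j, P i (y j) = if i = j then y j else 0 := by
    intro i j
    rcases eq_or_ne i j with rfl | hij
    · rw [hP, div_self (hyy0 i), one_smul, if_pos rfl]
    · rw [hP, hy j i (Ne.symm hij), zero_div, zero_smul, if_neg hij]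
  -- bound for P i
  have hPx : ∀ i (x : Cz K), ‖P i x‖ ≤ ‖x‖ := by
    intro i x
    rw [hP]
    calc ‖(pr x (y i) / pr (y i) (y i)) • y i‖
        = ‖pr x (y i) / pr (y i) (y i)‖ * ‖y i‖ := cz_norm_smul _ _
      _ = ‖pr x (y i)‖ := by rw [norm_div, hyy i, div_one, hy1 i, mul_one]
      _ ≤ ‖x‖ * ‖y i‖ := pr_le hna x (y i)
      _ = ‖x‖ := by rw [hy1 i, mul_one]
  -- T applied pointwise
  have hTx : ∀ x : Cz K, T x = ∑' i, lam i • P i x := by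
    intro x
    have := (ContinuousLinearMap.apply K (Cz K) x).map_tsum hsum
    simpa using this
  -- H on the basis
  have hHy : ∀ j, H (y j) = (α + lam j) • y j := by
    intro j
    have h1 : T (y j) = lam j • y j := by
      rw [hTx]
      rw [tsum_eq_single j]
      · rw [hPy, if_pos rfl]
      · intro i hij
        rw [hPy, if_neg hij, smul_zero]
    show α • y j + T (y j) = (α + lam j) • y j
    rw [h1]
    exact (add_smul α (lam j) (y j)).symm
  have hHn : ∀ m j, (H ^ m) (y j) = ((α + lam j) ^ m) • y j := by
    intro m j
    induction m with
    | zero => simp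
    | succ k ih =>
      rw [pow_succ, ContinuousLinearMap.mul_apply, hHy j, map_smul, ih, smul_smul,
        ← pow_succ']
  -- lower bound for ‖H^n‖
  have hlow : ∀ j, ‖α + lam j‖ ^ n ≤ ‖H ^ n‖ := by
    intro j
    have h1 : ‖(H ^ n) (y j)‖ = ‖α + lam j‖ ^ n := by
      rw [hHn n j]
      calc ‖((α + lam j) ^ n) • y j‖ = ‖(α + lam j) ^ n‖ * ‖y j‖ := cz_norm_smul _ _
        _ = ‖α + lam j‖ ^ n := by rw [norm_pow, hy1 j, mul_one]
    have h2 := (H ^ n).le_opNorm (y j)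
    rw [h1, hy1 j, mul_one] at h2
    exact h2
  -- upper bound for ‖H‖
  have hHle : ‖H‖ ≤ max ‖α‖ ‖lam‖ := by
    refine ContinuousLinearMap.opNorm_le_bound _ (le_max_iff.mpr (Or.inl (norm_nonneg α)))
      fun x => ?_
    have h1 : ‖T x‖ ≤ ‖lam‖ * ‖x‖ := by
      rw [hTx]
      refine IsUltrametricDist.norm_tsum_le_of_forall_le_of_nonneg
        (mul_nonneg (norm_nonneg _) (norm_nonneg _)) fun i => ?_
      calc ‖lam i • P i x‖ = ‖lam i‖ * ‖P i x‖ := cz_norm_smul _ _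
        _ ≤ ‖lam‖ * ‖x‖ :=
          mul_le_mul (cz_le_norm lam i) (hPx i x) (norm_nonneg _) (norm_nonneg _)
    have h2 : H x = α • x + T x := rfl
    rw [h2]
    refine (IsUltrametricDist.norm_add_le_max _ _).trans (max_le ?_ ?_)
    · calc ‖α • x‖ = ‖α‖ * ‖x‖ := cz_norm_smul _ _
        _ ≤ max ‖α‖ ‖lam‖ * ‖x‖ :=
          mul_le_mul_of_nonneg_right (le_max_left _ _) (norm_nonneg x)
    · exact h1.trans (mul_le_mul_of_nonneg_right (le_max_right _ _) (norm_nonneg x))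
  -- there is an index achieving the max
  have hexj : ∃ j, max ‖α‖ ‖lam‖ ≤ ‖α + lam j‖ := by
    rcases le_or_gt ‖lam‖ ‖α‖ with hle | hlt
    · rcases eq_or_ne α 0 with rfl | hα
      · refine ⟨0, ?_⟩
        have : ‖lam‖ = 0 := le_antisymm (by simpa using hle) (norm_nonneg _)
        simp [this]
      · have hev : ∀ᶠ j in cofinite, ‖lam j‖ < ‖α‖ := by
          have : Tendsto (fun j => ‖lam j‖) cofinite (𝓝 0) := by
            simpa using (cz_tendsto lam).norm
          exact this.eventually_lt_const (norm_pos_iff.mpr hα)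
        obtain ⟨j, hj⟩ := hev.exists
        refine ⟨j, ?_⟩
        rw [max_eq_left hle]
        by_contra hcon
        push_neg at hcon
        have h3 := hna (α + lam j) (-lam j)
        simp only [add_neg_cancel_right, norm_neg] at h3
        exact absurd h3 (not_le.mpr (max_lt hcon hj))
    · obtain ⟨j, hj⟩ := cz_exists_norm_eq lam
      refine ⟨j, ?_⟩
      rw [max_eq_right hlt.le, ← hj]
      have hja : ‖α‖ < ‖lam j‖ := by rw [hj]; exact hlt
      by_contra hcon
      push_neg at hcon
      have h3 := hna (α + lam j) (-α)
      simp only [norm_neg] at h3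
      rw [show α + lam j + -α = lam j by ring] at h3
      exact absurd h3 (not_le.mpr (max_lt hcon hja))
  obtain ⟨j, hj⟩ := hexj
  have h1 : ‖H‖ ≤ ‖α + lam j‖ := hHle.trans hj
  have h2 : ‖H ^ n‖ ≤ ‖H‖ ^ n := norm_pow_le' H (lt_of_lt_of_le zero_lt_one hn)
  have h3 : ‖H‖ ^ n ≤ ‖H ^ n‖ := by
    calc ‖H‖ ^ n ≤ ‖α + lam j‖ ^ n := by gcongr
      _ ≤ ‖H ^ n‖ := hlow j
  exact le_antisymm h2 h3
end
end
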